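/- For the driven-dissipative qubit with Lindblad generator L(ρ) = −iα[σ_x, ρ] + κ𝒟[σ_−]ρ, the steady-state ergotropy with respect to H_0 = (ω_0/2)(σ_z+1) equals 𝓔_ss = (ω_0 κ/2)·(√(16α² + κ²) − κ)/(8α² + κ²). -/

import Mathlib

open Matrix
open scoped ComplexOrder

/-- Energy of a state `ρ` with respect to Hamiltonian `H`: `Tr[Hρ]` (real part). -/
noncomputable def energy {d : ℕ} (H ρ : Matrix (Fin d) (Fin d) ℂ) : ℝ :=
  (Matrix.trace (H * ρ)).re

/-- Minimal energy achievable from `ρ` by unitaries (passive-state energy). -/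
noncomputable def passiveEnergy {d : ℕ} (H ρ : Matrix (Fin d) (Fin d) ℂ) : ℝ :=
  sInf {x : ℝ | ∃ U ∈ Matrix.unitaryGroup (Fin d) ℂ, x = energy H (U * ρ * Uᴴ)}

/-- Ergotropy: maximal work extractable by unitaries. -/
noncomputable def ergotropy {d : ℕ} (H ρ : Matrix (Fin d) (Fin d) ℂ) : ℝ :=
  energy H ρ - passiveEnergy H ρ

/-- Pauli matrices. -/
noncomputable def sigmaX : Matrix (Fin 2) (Fin 2) ℂ := !![0, 1; 1, 0]
noncomputable def sigmaY : Matrix (Fin 2) (Fin 2) ℂ := !![0, -Complex.I; Complex.I, 0]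
noncomputable def sigmaZ : Matrix (Fin 2) (Fin 2) ℂ := !![1, 0; 0, -1]

/-- Lowering operator `σ₋ = |g⟩⟨e|`. -/
noncomputable def sigmaMinus : Matrix (Fin 2) (Fin 2) ℂ := !![0, 0; 1, 0]

/-- Qubit Hamiltonian `H₀ = (ω₀/2)(σ_z + 1)`. -/
noncomputable def qubitH (ω₀ : ℝ) : Matrix (Fin 2) (Fin 2) ℂ :=
  (ω₀ / 2) • (sigmaZ + 1)

/-- Purity `μ(ρ) = Tr[ρ²]`. -/
noncomputable def purity (ρ : Matrix (Fin 2) (Fin 2) ℂ) : ℝ :=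
  (Matrix.trace (ρ * ρ)).re

/-- Lindblad generator of the driven-dissipative qubit:
`L(ρ) = -iα[σ_x, ρ] + κ(σ₋ρσ₊ − ½{σ₊σ₋, ρ})`. -/
noncomputable def lindblad (α κ : ℝ) (ρ : Matrix (Fin 2) (Fin 2) ℂ) :
    Matrix (Fin 2) (Fin 2) ℂ :=
  (-(Complex.I * α)) • (sigmaX * ρ - ρ * sigmaX) +
    (κ : ℂ) • (sigmaMinus * ρ * sigmaMinusᴴ -
      (1 / 2 : ℂ) • (sigmaMinusᴴ * sigmaMinus * ρ + ρ * (sigmaMinusᴴ * sigmaMinus)))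

/-- The steady state of the driven-dissipative qubit, explicitly. -/
lemma steady_state_eq (α κ : ℝ) (hα : 0 < α) (hκ : 0 < κ) (ρ : Matrix (Fin 2) (Fin 2) ℂ)
    (htr : ρ.trace = 1) (hss : lindblad α κ ρ = 0) :
    ρ = !![((4*α^2/(8*α^2+κ^2) : ℝ) : ℂ), -(Complex.I * ((2*α*κ/(8*α^2+κ^2) : ℝ) : ℂ));
           Complex.I * ((2*α*κ/(8*α^2+κ^2) : ℝ) : ℂ), 1 - ((4*α^2/(8*α^2+κ^2) : ℝ) : ℂ)] := by
  have hD : (8*α^2+κ^2 : ℝ) ≠ 0 := by positivity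
  have hDc : (8*(α:ℂ)^2+(κ:ℂ)^2) ≠ 0 := by exact_mod_cast hD
  have hκc : (κ : ℂ) ≠ 0 := by exact_mod_cast hκ.ne'
  rw [← Matrix.ext_iff] at hss
  have h01 := hss 0 1
  have h10 := hss 1 0
  have h11 := hss 1 1
  simp [lindblad, sigmaX, sigmaMinus, Matrix.mul_apply, Fin.sum_univ_two, Matrix.vecMul,
    dotProduct, Matrix.conjTranspose_apply] at h01 h10 h11
  rw [Matrix.trace_fin_two] at htr
  have ha : ρ 0 0 = ((4*α^2/(8*α^2+κ^2) : ℝ) : ℂ) := by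
    push_cast
    rw [eq_div_iff hDc]
    linear_combination (κ:ℂ)*h11 - 2*Complex.I*α*h01 + 2*Complex.I*α*h10 + 4*(α:ℂ)^2*htr +
      4*(α:ℂ)^2*(ρ 0 0 - ρ 1 1)*Complex.I_sq
  have hd : ρ 1 1 = 1 - ((4*α^2/(8*α^2+κ^2) : ℝ) : ℂ) := by
    rw [← ha]; linear_combination htr
  have hb : ρ 0 1 = -(Complex.I * ((2*α*κ/(8*α^2+κ^2) : ℝ) : ℂ)) := by
    rw [ha, hd] at h01
    push_cast at h01
    field_simp at h01
    have h2 : (κ:ℂ) * ((8*(α:ℂ)^2+κ^2) * ρ 0 1) = (κ:ℂ) * (-(Complex.I*(2*(α:ℂ)*κ))) := by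
      linear_combination (-1:ℂ)*h01
    have h3 := mul_left_cancel₀ hκc h2
    push_cast
    field_simp
    linear_combination h3
  have hc : ρ 1 0 = Complex.I * ((2*α*κ/(8*α^2+κ^2) : ℝ) : ℂ) := by
    rw [ha, hd] at h10
    push_cast at h10
    field_simp at h10
    have h2 : (κ:ℂ) * ((8*(α:ℂ)^2+κ^2) * ρ 1 0) = (κ:ℂ) * (Complex.I*(2*(α:ℂ)*κ)) := by
      linear_combination (-1:ℂ)*h10
    have h3 := mul_left_cancel₀ hκc h2
    push_cast
    field_simp
    linear_combination h3
  ext i j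
  fin_cases i <;> fin_cases j <;> simp [ha, hb, hc, hd]

/-- Passive energy of an explicit qubit state. -/
lemma passive_aux (ω₀ p β lam : ℝ) (hω : 0 < ω₀) (hβ : 0 < β)
    (hA : 0 < p - lam) (hC : 0 < 1 - p - lam)
    (hprod : (p - lam) * (1 - p - lam) = β^2) :
    passiveEnergy (qubitH ω₀) !![(p:ℂ), -(Complex.I*β); Complex.I*β, 1-p] = ω₀ * lam := by
  set E : Matrix (Fin 2) (Fin 2) ℂ := !![(p:ℂ), -(Complex.I*β); Complex.I*β, 1-p] with hE
  have hlow : ∀ x ∈ {x : ℝ | ∃ U ∈ Matrix.unitaryGroup (Fin 2) ℂ, x = energy (qubitH ω₀) (U * E * Uᴴ)},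
      ω₀ * lam ≤ x := by
    rintro x ⟨U, hU, rfl⟩
    have hUU : U * star U = 1 := (Matrix.mem_unitaryGroup_iff.mp hU)
    have h1 : (U 0 0) * star (U 0 0) + (U 0 1) * star (U 0 1) = 1 := by
      have := congrFun (congrFun hUU 0) 0
      simpa [Matrix.mul_apply, Fin.sum_univ_two, Matrix.star_apply, Matrix.one_apply] using this
    have h1' : (U 0 0).re^2 + (U 0 0).im^2 + ((U 0 1).re^2 + (U 0 1).im^2) = 1 := by
      have := congrArg Complex.re h1
      simpa [Complex.mul_re, Complex.mul_im, pow_two] using this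
    simp [energy, qubitH, sigmaZ, Matrix.trace_fin_two, Matrix.mul_apply, Fin.sum_univ_two,
      Matrix.conjTranspose_apply, hE]
    rw [mul_comm]
    have h3 : ((p-lam)*(1-p-lam) - β^2) * ((U 0 0).re^2 + (U 0 0).im^2) = 0 := by
      rw [hprod]; ring
    have h2 : lam ≤ ((U 0 0).re * p + -((U 0 1).im * β)) * (U 0 0).re + ((U 0 0).im * p + (U 0 1).re * β) * (U 0 0).im +
        (((U 0 0).im * β + (U 0 1).re * (1 - p)) * (U 0 1).re +
          (-((U 0 0).re * β) + (U 0 1).im * (1 - p)) * (U 0 1).im) := by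
      have h4 : lam * (((U 0 0).re^2 + (U 0 0).im^2) + ((U 0 1).re^2 + (U 0 1).im^2)) ≤
          ((U 0 0).re * p + -((U 0 1).im * β)) * (U 0 0).re + ((U 0 0).im * p + (U 0 1).re * β) * (U 0 0).im +
          (((U 0 0).im * β + (U 0 1).re * (1 - p)) * (U 0 1).re +
            (-((U 0 0).re * β) + (U 0 1).im * (1 - p)) * (U 0 1).im) := by
        nlinarith [sq_nonneg (β*(U 0 0).re - (1-p-lam)*(U 0 1).im),
          sq_nonneg (β*(U 0 0).im + (1-p-lam)*(U 0 1).re), h3, hC]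
      calc lam = lam * (((U 0 0).re^2 + (U 0 0).im^2) + ((U 0 1).re^2 + (U 0 1).im^2)) := by
            rw [h1']; ring
        _ ≤ _ := h4
    nlinarith [mul_le_mul_of_nonneg_left h2 hω.le]
  have hN2 : Real.sqrt (β^2 + (p-lam)^2) ^ 2 = β^2 + (p-lam)^2 :=
    Real.sq_sqrt (by positivity)
  set N := Real.sqrt (β^2 + (p-lam)^2) with hNdef
  have hN : 0 < N := Real.sqrt_pos.mpr (by positivity)
  set c := β / N with hcdef
  set s := (p - lam) / N with hsdef
  have hcs : c^2 + s^2 = 1 := by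
    rw [hcdef, hsdef, div_pow, div_pow, ← add_div, hN2, div_self (by positivity)]
  set U : Matrix (Fin 2) (Fin 2) ℂ := !![(c:ℂ), Complex.I*s; Complex.I*s, c] with hUdef
  have hU : U ∈ Matrix.unitaryGroup (Fin 2) ℂ := by
    rw [Matrix.mem_unitaryGroup_iff]
    ext i j
    fin_cases i <;> fin_cases j <;>
      simp [hUdef, Matrix.mul_apply, Fin.sum_univ_two, Matrix.star_apply, Matrix.one_apply,
        Complex.ext_iff, Complex.mul_re, Complex.mul_im] <;> nlinarith [hcs]
  have hkey2 : p*β^2 + (1-p)*(p-lam)^2 - 2*β^2*(p-lam) = lam*N^2 := by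
    linear_combination (p-lam)*hprod - lam*hN2
  have hkey : p*c^2 + (1-p)*s^2 - 2*β*(c*s) = lam := by
    have hc2 : c^2 * N^2 = β^2 := by
      rw [hcdef, div_pow]; field_simp
    have hs2 : s^2 * N^2 = (p-lam)^2 := by
      rw [hsdef, div_pow]; field_simp
    have hcsN : (c*s) * N^2 = β*(p-lam) := by
      rw [hcdef, hsdef, div_mul_div_comm]; field_simp
    have h5 : (p*c^2 + (1-p)*s^2 - 2*β*(c*s)) * N^2 = lam * N^2 := by
      linear_combination p*hc2 + (1-p)*hs2 - 2*β*hcsN + hkey2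
    exact mul_right_cancel₀ (pow_ne_zero 2 hN.ne') h5
  have hM00 : (U * E * Uᴴ) 0 0 = ((lam : ℝ) : ℂ) := by
    rw [← hkey]
    simp [hUdef, hE, Matrix.mul_apply, Fin.sum_univ_two, Matrix.conjTranspose_apply]
    linear_combination (2*(β:ℂ)*c*s - (1-(p:ℂ))*s^2) * Complex.I_sq
  have hval : energy (qubitH ω₀) (U * E * Uᴴ) = ω₀ * lam := by
    have htr2 : Matrix.trace (qubitH ω₀ * (U * E * Uᴴ)) = (ω₀:ℂ) * ((U * E * Uᴴ) 0 0) := by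
      simp [qubitH, sigmaZ, Matrix.trace_fin_two, Matrix.mul_apply, Fin.sum_univ_two,
        Matrix.add_apply, Matrix.one_apply, Matrix.smul_apply]
      try ring
    rw [energy, htr2, hM00]
    simp
  have hmem : ω₀ * lam ∈ {x : ℝ | ∃ U ∈ Matrix.unitaryGroup (Fin 2) ℂ, x = energy (qubitH ω₀) (U * E * Uᴴ)} :=
    ⟨U, hU, hval.symm⟩
  exact le_antisymm (csInf_le ⟨ω₀ * lam, hlow⟩ hmem) (le_csInf ⟨ω₀ * lam, hmem⟩ hlow)

/-- the steady-state ergotropy of the driven-dissipative qubit equals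
`(ω₀κ/2)·(√(16α² + κ²) − κ)/(8α² + κ²)`. -/
theorem steady_state_ergotropy (α κ ω₀ : ℝ) (hα : 0 < α) (hκ : 0 < κ) (hω : 0 < ω₀)
    (ρss : Matrix (Fin 2) (Fin 2) ℂ)
    (hpos : ρss.PosSemidef) (htr : ρss.trace = 1) (hss : lindblad α κ ρss = 0) :
    ergotropy (qubitH ω₀) ρss =
      (ω₀ * κ / 2) * ((Real.sqrt (16 * α ^ 2 + κ ^ 2) - κ) / (8 * α ^ 2 + κ ^ 2)) := by
  have hrho := steady_state_eq α κ hα hκ ρss htr hss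
  have hD : (0:ℝ) < 8*α^2+κ^2 := by positivity
  set D := (8*α^2+κ^2 : ℝ) with hDdef
  set p := (4*α^2/D : ℝ) with hpdef
  set β := (2*α*κ/D : ℝ) with hβdef
  set sq := Real.sqrt (16*α^2+κ^2) with hsqdef
  have hsq2 : sq^2 = 16*α^2+κ^2 := Real.sq_sqrt (by positivity)
  have hκsq : κ < sq := by
    have : κ = Real.sqrt (κ^2) := (Real.sqrt_sq hκ.le).symm
    rw [this, hsqdef]
    exact Real.sqrt_lt_sqrt (by positivity) (by nlinarith)
  set lam := ((1 - κ*sq/D)/2 : ℝ) with hlamdef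
  have hβ : 0 < β := by rw [hβdef]; positivity
  have heA : p - lam = κ*(sq - κ)/(2*D) := by
    rw [hpdef, hlamdef, hDdef]; field_simp; ring
  have heC : 1 - p - lam = κ*(sq + κ)/(2*D) := by
    rw [hpdef, hlamdef, hDdef]; field_simp; ring
  have hA : 0 < p - lam := by
    rw [heA]
    exact div_pos (mul_pos hκ (by linarith)) (by positivity)
  have hC : 0 < 1 - p - lam := by
    rw [heC]
    exact div_pos (mul_pos hκ (by linarith)) (by positivity)
  have hprod : (p - lam) * (1 - p - lam) = β^2 := by
    rw [heA, heC, hβdef, hDdef]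
    field_simp
    linear_combination hsq2
  have hpass : passiveEnergy (qubitH ω₀) ρss = ω₀ * lam := by
    rw [hrho]
    exact passive_aux ω₀ p β lam hω hβ hA hC hprod
  have henergy : energy (qubitH ω₀) ρss = ω₀ * p := by
    rw [hrho]
    simp [energy, qubitH, sigmaZ, Matrix.trace_fin_two, Matrix.mul_apply, Fin.sum_univ_two]
    try ring
  rw [ergotropy, henergy, hpass, hpdef, hlamdef, hDdef]
  field_simp
  ring
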